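/- Let w ∈ B_n have window avoiding the five signed patterns 1 2̄, 2̄ 1, 2̄ 1̄, 3 1 2, 3 1̄ 2, let p = #{j : w_j < 0}, and for 1 ≤ j ≤ n let m_j = max({p} ∪ {w_1,…,w_j}), the maximum taken in ℤ. Define a_i = −i for 1 ≤ i ≤ p and a_i = i for p < i ≤ n. Then for every j ∈ {1,…,n}, w_j = max({a_1, a_2, …, a_{m_j}} ∖ {w_1,…,w_{j−1}}). (In particular, w is recovered from the partial order Q(w) together with its grounded set; that is, Algorithm qtow inverts Algorithm wtoq.) -/

import Mathlib

open scoped BigOperators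

/-- Membership in the hyperoctahedral group `B_n`, viewed as permutations `w` of `ℤ`
satisfying `w (-i) = - w i` and fixing everything outside `{-n, …, -1, 1, …, n}`. -/
def IsBn (n : ℕ) (w : Equiv.Perm ℤ) : Prop :=
  (∀ i : ℤ, w (-i) = - w i) ∧ ∀ i : ℤ, (n : ℤ) < |i| → w i = i

/-- The window of `w` avoids the signed pattern `1 2̄`. -/
def Avoids12bar (n : ℕ) (w : Equiv.Perm ℤ) : Prop :=
  ¬ ∃ i j : ℤ, 1 ≤ i ∧ i < j ∧ j ≤ (n : ℤ) ∧ 0 < w i ∧ w j < 0 ∧ w i < -(w j)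

/-- The window of `w` avoids the signed pattern `2̄ 1`. -/
def Avoids2bar1 (n : ℕ) (w : Equiv.Perm ℤ) : Prop :=
  ¬ ∃ i j : ℤ, 1 ≤ i ∧ i < j ∧ j ≤ (n : ℤ) ∧ w i < 0 ∧ 0 < w j ∧ w j < -(w i)

/-- The window of `w` avoids the signed pattern `2̄ 1̄`. -/
def Avoids2bar1bar (n : ℕ) (w : Equiv.Perm ℤ) : Prop :=
  ¬ ∃ i j : ℤ, 1 ≤ i ∧ i < j ∧ j ≤ (n : ℤ) ∧ w i < w j ∧ w j < 0

/-- The window of `w` avoids the signed pattern `3 1 2`. -/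
def Avoids312s (n : ℕ) (w : Equiv.Perm ℤ) : Prop :=
  ¬ ∃ i j k : ℤ, 1 ≤ i ∧ i < j ∧ j < k ∧ k ≤ (n : ℤ) ∧ 0 < w j ∧ w j < w k ∧ w k < w i

/-- The window of `w` avoids the signed pattern `3 1̄ 2`. -/
def Avoids31bar2 (n : ℕ) (w : Equiv.Perm ℤ) : Prop :=
  ¬ ∃ i j k : ℤ, 1 ≤ i ∧ i < j ∧ j < k ∧ k ≤ (n : ℤ) ∧
    w j < 0 ∧ 0 < w k ∧ w k < w i ∧ -(w j) < w k

/-- The window of `w` avoids the five signed patterns `1 2̄`, `2̄ 1`, `2̄ 1̄`, `3 1 2`, `3 1̄ 2`. -/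
def AvoidsFive (n : ℕ) (w : Equiv.Perm ℤ) : Prop :=
  Avoids12bar n w ∧ Avoids2bar1 n w ∧ Avoids2bar1bar n w ∧ Avoids312s n w ∧ Avoids31bar2 n w

/-- The long one-line notation `(w(-n), …, w(-1), w(1), …, w(n))` avoids the pattern `3412`. -/
def LongAvoids3412 (n : ℕ) (w : Equiv.Perm ℤ) : Prop :=
  ¬ ∃ i1 i2 i3 i4 : ℤ, -(n : ℤ) ≤ i1 ∧ i1 < i2 ∧ i2 < i3 ∧ i3 < i4 ∧ i4 ≤ (n : ℤ) ∧
    i1 ≠ 0 ∧ i2 ≠ 0 ∧ i3 ≠ 0 ∧ i4 ≠ 0 ∧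
    w i3 < w i4 ∧ w i4 < w i1 ∧ w i1 < w i2

/-- The long one-line notation `(w(-n), …, w(-1), w(1), …, w(n))` avoids the pattern `4231`. -/
def LongAvoids4231 (n : ℕ) (w : Equiv.Perm ℤ) : Prop :=
  ¬ ∃ i1 i2 i3 i4 : ℤ, -(n : ℤ) ≤ i1 ∧ i1 < i2 ∧ i2 < i3 ∧ i3 < i4 ∧ i4 ≤ (n : ℤ) ∧
    i1 ≠ 0 ∧ i2 ≠ 0 ∧ i3 ≠ 0 ∧ i4 ≠ 0 ∧
    w i4 < w i2 ∧ w i2 < w i3 ∧ w i3 < w i1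

/-- `p`, the number of negative letters in the window `(w 1, …, w n)`. -/
noncomputable def negCount (n : ℕ) (w : Equiv.Perm ℤ) : ℕ :=
  ((Finset.Icc (1 : ℤ) (n : ℤ)).filter (fun i => w i < 0)).card

/-- `m_j = max ({p} ∪ {w 1, …, w j})`. -/
noncomputable def mval (n : ℕ) (w : Equiv.Perm ℤ) (j : ℤ) : ℤ :=
  (insert ((negCount n w : ℤ)) ((Finset.Icc (1 : ℤ) j).image (fun i => w i))).max'
    (Finset.insert_nonempty _ _)

/-- The strict order `Q(w)` on `{1, …, n}`: `j <_{Q(w)} i` iff `i > m_j`. -/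
def qlt (n : ℕ) (w : Equiv.Perm ℤ) (j i : ℤ) : Prop := mval n w j < i

/-- `i` and `j` are incomparable in `Q(w)`. -/
def QIncomp (n : ℕ) (w : Equiv.Perm ℤ) (i j : ℤ) : Prop :=
  i ≠ j ∧ ¬ qlt n w i j ∧ ¬ qlt n w j i

/-- The word `a_1 ⋯ a_n = 1̄ ⋯ p̄ (p+1) ⋯ n` from Algorithm qtow:
`a_i = -i` for `i ≤ p` and `a_i = i` otherwise. -/
def aFun (p : ℕ) (i : ℤ) : ℤ := if i ≤ (p : ℤ) then -i else i

namespace StmtSix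
variable {n : ℕ} {w : Equiv.Perm ℤ}

lemma w_zero (hw : IsBn n w) : w 0 = 0 := by
  have h := hw.1 0
  simp only [neg_zero] at h
  omega

lemma w_ne (hw : IsBn n w) {i : ℤ} (hi : 1 ≤ i) : w i ≠ 0 := by
  intro h
  have : w i = w 0 := by rw [h, w_zero hw]
  have := w.injective this
  omega

lemma abs_w_le (hw : IsBn n w) {i : ℤ} (hi : 1 ≤ i) (hin : i ≤ (n : ℤ)) : |w i| ≤ (n : ℤ) := by
  by_contra h
  push_neg at h
  have h2 := hw.2 (w i) h
  have := w.injective h2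
  rw [← this] at hin hi
  have : |w i| = w i := abs_of_pos (by omega)
  omega

/-- Surjectivity onto the window values. -/
lemma surj (hw : IsBn n w) {t : ℤ} (ht1 : 1 ≤ t) (ht2 : t ≤ (n : ℤ)) :
    ∃ s : ℤ, 1 ≤ s ∧ s ≤ (n : ℤ) ∧ (w s = t ∨ w s = -t) := by
  have hws : w (w.symm t) = t := w.apply_symm_apply t
  generalize hs : w.symm t = s at hws
  have hs0 : s ≠ 0 := by
    intro h; rw [h, w_zero hw] at hws; omega
  have habs : |s| ≤ (n : ℤ) := by
    by_contra h
    push_neg at h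
    have := hw.2 s h
    rw [this] at hws
    subst hws
    rw [abs_of_pos (by omega)] at h
    omega
  rcases le_or_gt 1 s with h | h
  · exact ⟨s, h, by rw [abs_of_pos (by omega)] at habs; omega, Or.inl hws⟩
  · refine ⟨-s, by omega, by rw [abs_of_neg (by omega)] at habs; omega, Or.inr ?_⟩
    rw [hw.1 s, hws]

/-- Cross lemma: every positive window entry exceeds the absolute value of
every negative window entry. -/
lemma cross (hw : IsBn n w) (h1 : Avoids12bar n w) (h2 : Avoids2bar1 n w)
    {i j : ℤ} (hi : 1 ≤ i) (hin : i ≤ (n : ℤ)) (hj : 1 ≤ j) (hjn : j ≤ (n : ℤ))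
    (hpi : 0 < w i) (hnj : w j < 0) : -(w j) < w i := by
  have hne : w i ≠ -(w j) := by
    intro h
    have : w i = w (-j) := by rw [hw.1 j, h]
    have := w.injective this
    omega
  rcases lt_trichotomy i j with h | h | h
  · by_contra hc
    push_neg at hc
    exact h1 ⟨i, j, hi, h, hjn, hpi, hnj, by omega⟩
  · exfalso; subst h; omega
  · by_contra hc
    push_neg at hc
    exact h2 ⟨j, i, hj, h, hin, hnj, hpi, by omega⟩

lemma negCount_le_n : (negCount n w : ℤ) ≤ (n : ℤ) := by
  have h := Finset.card_le_card (Finset.filter_subset (fun i => w i < 0) (Finset.Icc (1 : ℤ) (n : ℤ)))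
  rw [Int.card_Icc] at h
  unfold negCount
  omega

/-- Every positive window value exceeds `p`. -/
lemma pos_gt_p (hw : IsBn n w) (h1 : Avoids12bar n w) (h2 : Avoids2bar1 n w)
    {i : ℤ} (hi : 1 ≤ i) (hin : i ≤ (n : ℤ)) (hpos : 0 < w i) :
    (negCount n w : ℤ) < w i := by
  have hcard : ((Finset.Icc (1 : ℤ) (n : ℤ)).filter (fun j => w j < 0)).card ≤
      (Finset.Icc (1 : ℤ) (w i - 1)).card := by
    apply Finset.card_le_card_of_injOn (fun j => -(w j))
    · intro j hj
      simp only [Finset.mem_coe, Finset.mem_filter, Finset.mem_Icc] at hj ⊢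
      have := cross hw h1 h2 hi hin hj.1.1 hj.1.2 hpos hj.2
      omega
    · intro a _ b _ hab
      simp only at hab
      exact w.injective (neg_inj.mp hab)
  rw [Int.card_Icc] at hcard
  unfold negCount
  omega

/-- Every negative window value has absolute value at most `p`. -/
lemma neg_abs_le_p (hw : IsBn n w) (h1 : Avoids12bar n w) (h2 : Avoids2bar1 n w)
    {j : ℤ} (hj : 1 ≤ j) (hjn : j ≤ (n : ℤ)) (hneg : w j < 0) :
    -(w j) ≤ (negCount n w : ℤ) := by
  have hyn : -(w j) ≤ (n : ℤ) := by
    have := abs_w_le hw hj hjn; rw [abs_of_neg hneg] at this; omega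
  have hcard : (Finset.Icc (1 : ℤ) (-(w j))).card ≤
      ((Finset.Icc (1 : ℤ) (n : ℤ)).filter (fun i => w i < 0)).card := by
    apply Finset.card_le_card_of_injOn (fun t => w.symm (-t))
    · intro t ht
      simp only [Finset.mem_coe, Finset.mem_Icc] at ht
      obtain ⟨s, hs1, hs2, hs3⟩ := surj hw ht.1 (by omega)
      rcases hs3 with h | h
      · exfalso
        have := cross hw h1 h2 hs1 hs2 hj hjn (by omega) hneg
        omega
      · have : w.symm (-t) = s := by rw [← h]; exact w.symm_apply_apply s
        show w.symm (-t) ∈ _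
        rw [this]
        simp only [Finset.mem_coe, Finset.mem_filter, Finset.mem_Icc]
        exact ⟨⟨hs1, hs2⟩, by omega⟩
    · intro a _ b _ hab
      simp only at hab
      have := w.symm.injective hab
      omega
  rw [Int.card_Icc] at hcard
  unfold negCount
  omega

/-- The value of a negative window entry is determined by the number of
negative entries before it. -/
lemma neg_value (hw : IsBn n w) (h1 : Avoids12bar n w) (h2 : Avoids2bar1 n w)
    (h3 : Avoids2bar1bar n w) {j : ℤ} (hj : 1 ≤ j) (hjn : j ≤ (n : ℤ)) (hneg : w j < 0) :
    w j = -((((Finset.Icc (1 : ℤ) (j - 1)).filter (fun i => w i < 0)).card : ℤ) + 1) := by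
  have hyp : -(w j) ≤ (negCount n w : ℤ) := neg_abs_le_p hw h1 h2 hj hjn hneg
  have hc1 : ((Finset.Icc (1 : ℤ) (j - 1)).filter (fun i => w i < 0)).card ≤
      (Finset.Icc (1 : ℤ) (-(w j) - 1)).card := by
    apply Finset.card_le_card_of_injOn (fun t => -(w t))
    · intro t ht
      simp only [Finset.mem_coe, Finset.mem_filter, Finset.mem_Icc] at ht ⊢
      have hne : w t ≠ w j := fun h => by have := w.injective h; omega
      have hlt : ¬ (w t < w j) := fun hlt =>
        h3 ⟨t, j, ht.1.1, by omega, hjn, hlt, hneg⟩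
      omega
    · intro a _ b _ hab
      simp only at hab
      exact w.injective (neg_inj.mp hab)
  have hc2 : ((Finset.Icc (j + 1) (n : ℤ)).filter (fun i => w i < 0)).card ≤
      (Finset.Icc (-(w j) + 1) ((negCount n w : ℤ))).card := by
    apply Finset.card_le_card_of_injOn (fun t => -(w t))
    · intro t ht
      simp only [Finset.mem_coe, Finset.mem_filter, Finset.mem_Icc] at ht ⊢
      have hne : w t ≠ w j := fun h => by have := w.injective h; omega
      have hlt : ¬ (w j < w t) := fun hlt =>
        h3 ⟨j, t, hj, by omega, ht.1.2, hlt, ht.2⟩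
      have := neg_abs_le_p hw h1 h2 (show (1 : ℤ) ≤ t by omega) ht.1.2 ht.2
      omega
    · intro a _ b _ hab
      simp only at hab
      exact w.injective (neg_inj.mp hab)
  have hsub : (Finset.Icc (1 : ℤ) (n : ℤ)).filter (fun i => w i < 0) ⊆
      ((Finset.Icc (1 : ℤ) (j - 1)).filter (fun i => w i < 0)) ∪
        insert j ((Finset.Icc (j + 1) (n : ℤ)).filter (fun i => w i < 0)) := by
    intro t ht
    simp only [Finset.mem_filter, Finset.mem_Icc, Finset.mem_union, Finset.mem_insert] at ht ⊢
    rcases lt_trichotomy t j with h | h | h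
    · exact Or.inl ⟨⟨ht.1.1, by omega⟩, ht.2⟩
    · exact Or.inr (Or.inl h)
    · exact Or.inr (Or.inr ⟨⟨by omega, ht.1.2⟩, ht.2⟩)
  have hp := Finset.card_le_card hsub
  have hu := Finset.card_union_le
    ((Finset.Icc (1 : ℤ) (j - 1)).filter (fun i => w i < 0))
    (insert j ((Finset.Icc (j + 1) (n : ℤ)).filter (fun i => w i < 0)))
  have hins := Finset.card_insert_le j ((Finset.Icc (j + 1) (n : ℤ)).filter (fun i => w i < 0))
  rw [Int.card_Icc] at hc1 hc2
  have hnc : negCount n w = ((Finset.Icc (1 : ℤ) (n : ℤ)).filter (fun i => w i < 0)).card := rfl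
  omega

/-- All the values `-1, …, -(#negatives before j)` occur before position `j`. -/
lemma exists_neg_before (hw : IsBn n w) (h1 : Avoids12bar n w) (h2 : Avoids2bar1 n w)
    (h3 : Avoids2bar1bar n w) {j i : ℤ} (hj : 1 ≤ j) (hjn : j ≤ (n : ℤ)) (hi : 1 ≤ i)
    (hic : i ≤ (((Finset.Icc (1 : ℤ) (j - 1)).filter (fun t => w t < 0)).card : ℤ)) :
    ∃ t : ℤ, 1 ≤ t ∧ t < j ∧ w t = -i := by
  have hcp : ((Finset.Icc (1 : ℤ) (j - 1)).filter (fun t => w t < 0)).card ≤ negCount n w :=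
    Finset.card_le_card (Finset.filter_subset_filter _ (Finset.Icc_subset_Icc_right (by omega)))
  have hin : i ≤ (n : ℤ) := by have := negCount_le_n (n := n) (w := w); omega
  obtain ⟨s, hs1, hs2, hs3⟩ := surj hw hi hin
  rcases hs3 with h | h
  · exfalso
    have := pos_gt_p hw h1 h2 hs1 hs2 (by omega)
    omega
  · rcases lt_or_ge s j with hlt | hle
    · exact ⟨s, hs1, hlt, h⟩
    · exfalso
      have hmono : ((Finset.Icc (1 : ℤ) (j - 1)).filter (fun t => w t < 0)).card ≤
          ((Finset.Icc (1 : ℤ) (s - 1)).filter (fun t => w t < 0)).card :=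
        Finset.card_le_card (Finset.filter_subset_filter _ (Finset.Icc_subset_Icc_right (by omega)))
      have := neg_value hw h1 h2 h3 hs1 hs2 (show w s < 0 by omega)
      omega

lemma p_le_mval (j : ℤ) : (negCount n w : ℤ) ≤ mval n w j :=
  Finset.le_max' _ _ (Finset.mem_insert_self _ _)

lemma w_le_mval {i j : ℤ} (h1 : 1 ≤ i) (h2 : i ≤ j) : w i ≤ mval n w j :=
  Finset.le_max' _ _ (Finset.mem_insert_of_mem
    (Finset.mem_image_of_mem _ (Finset.mem_Icc.mpr ⟨h1, h2⟩)))

lemma mval_cases (j : ℤ) :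
    mval n w j = (negCount n w : ℤ) ∨ ∃ i : ℤ, 1 ≤ i ∧ i ≤ j ∧ w i = mval n w j := by
  have hm := Finset.max'_mem
    (insert ((negCount n w : ℤ)) ((Finset.Icc (1 : ℤ) j).image (fun i => w i)))
    (Finset.insert_nonempty _ _)
  rcases Finset.mem_insert.mp hm with h | h
  · exact Or.inl h
  · obtain ⟨i, hi, hiv⟩ := Finset.mem_image.mp h
    rw [Finset.mem_Icc] at hi
    exact Or.inr ⟨i, hi.1, hi.2, hiv⟩

lemma mval_le_n (hw : IsBn n w) {j : ℤ} (hjn : j ≤ (n : ℤ)) : mval n w j ≤ (n : ℤ) := by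
  apply Finset.max'_le
  intro y hy
  rcases Finset.mem_insert.mp hy with h | h
  · rw [h]; exact negCount_le_n
  · obtain ⟨i, hi, hiv⟩ := Finset.mem_image.mp h
    rw [Finset.mem_Icc] at hi
    have h1 := abs_w_le hw hi.1 (le_trans hi.2 hjn)
    have h2 := le_abs_self (w i)
    omega
end StmtSix


/-- Algorithm qtow inverts Algorithm wtoq: if the window of `w ∈ B_n`
avoids the five signed patterns, then for every `1 ≤ j ≤ n`, the entry `w j` is the
maximum of `{a_1, …, a_{m_j}} \ {w_1, …, w_{j-1}}`. -/
theorem stmt_6 (n : ℕ) (hn : 1 ≤ n) (w : Equiv.Perm ℤ) (hw : IsBn n w)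
    (h5 : AvoidsFive n w) :
    ∀ j : ℤ, 1 ≤ j → j ≤ (n : ℤ) →
      IsGreatest
        {x : ℤ | (∃ i : ℤ, 1 ≤ i ∧ i ≤ mval n w j ∧ aFun (negCount n w) i = x) ∧
          ¬ ∃ i : ℤ, 1 ≤ i ∧ i < j ∧ w i = x}
        (w j) := by
  obtain ⟨h1, h2, h3, h4, h5'⟩ := h5
  intro j hj hjn
  have hwj0 : w j ≠ 0 := StmtSix.w_ne hw hj
  constructor
  · constructor
    · rcases lt_or_gt_of_ne hwj0 with hneg | hpos
      · refine ⟨-(w j), by omega, ?_, ?_⟩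
        · exact le_trans (StmtSix.neg_abs_le_p hw h1 h2 hj hjn hneg) (StmtSix.p_le_mval j)
        · unfold aFun
          rw [if_pos (StmtSix.neg_abs_le_p hw h1 h2 hj hjn hneg)]
          ring
      · refine ⟨w j, by omega, StmtSix.w_le_mval hj le_rfl, ?_⟩
        unfold aFun
        rw [if_neg (by have := StmtSix.pos_gt_p hw h1 h2 hj hjn hpos; omega)]
    · rintro ⟨i, hi1, hi2, hie⟩
      have := w.injective hie
      omega
  · rintro x ⟨⟨i, hi1, him, hia⟩, hunused⟩
    unfold aFun at hia
    split_ifs at hia with hip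
    · -- x = -i, with i ≤ p
      rcases lt_or_gt_of_ne hwj0 with hneg | hpos
      · have hval := StmtSix.neg_value hw h1 h2 h3 hj hjn hneg
        by_contra hc
        push_neg at hc
        have hic : i ≤ (((Finset.Icc (1 : ℤ) (j - 1)).filter (fun t => w t < 0)).card : ℤ) := by
          omega
        obtain ⟨t, ht1, ht2, ht3⟩ := StmtSix.exists_neg_before hw h1 h2 h3 hj hjn hi1 hic
        exact hunused ⟨t, ht1, ht2, by omega⟩
      · omega
    · -- x = i, with p < i
      push_neg at hip
      subst hia
      by_contra hc
      push_neg at hc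
      rcases StmtSix.mval_cases (n := n) (w := w) j with hm | ⟨i0, hi01, hi0j, hi0v⟩
      · omega
      · have hi0lt : i0 < j := by
          rcases eq_or_lt_of_le hi0j with h | h
          · subst h; omega
          · exact h
        have hin : i ≤ (n : ℤ) := le_trans him (StmtSix.mval_le_n hw hjn)
        obtain ⟨k, hk1, hk2, hk3⟩ := StmtSix.surj hw hi1 hin
        rcases hk3 with h | h
        · have hkj : j < k := by
            rcases lt_trichotomy k j with hlt | heq | hgt
            · exact absurd ⟨k, hk1, hlt, h⟩ hunused
            · subst heq; omega
            · exact hgt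
          have hwine : w k < w i0 := by
            rcases eq_or_lt_of_le (show w k ≤ w i0 by rw [h, hi0v]; exact him) with he | hlt
            · exact absurd ⟨i0, hi01, hi0lt, by rw [← he, h]⟩ hunused
            · exact hlt
          rcases lt_or_gt_of_ne hwj0 with hneg | hpos
          · refine absurd ⟨i0, j, k, hi01, hi0lt, hkj, hk2, hneg, by omega, hwine, ?_⟩ h5'
            have := StmtSix.neg_abs_le_p hw h1 h2 hj hjn hneg
            omega
          · exact absurd ⟨i0, j, k, hi01, hi0lt, hkj, hk2, hpos, by omega, hwine⟩ h4
        · have := StmtSix.neg_abs_le_p hw h1 h2 hk1 hk2 (by omega)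
          omega
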